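/- Suppose ψ : U → ℝᵐ is continuously differentiable on an open set U ⊆ ℝⁿ and Λ : U → ℝ^{m×n} satisfies the multiplier relation Λ(x(t))(ẋ(t) − f(x(t))) = d/dt ψ(x(t)) for all C¹ curves x : I → U. Then for all y ∈ U, the Jacobian J_ψ(y) = Λ(y) and Λ(y) f(y) = 0. -/

import Mathlib

/-- If `ψ` is continuously differentiable on an open `U ⊆ ℝⁿ` and the multiplier `Λ`
satisfies `Λ(x(t))(ẋ(t) − f(x(t))) = d/dt ψ(x(t))` for all C¹ curves valued in `U`, then
for all `y ∈ U`, the Jacobian `J_ψ(y) = Λ(y)` and `Λ(y) f(y) = 0`. -/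
theorem stmt_14 {n m : ℕ}
    (U : Set (EuclideanSpace ℝ (Fin n))) (hU : IsOpen U)
    (f : EuclideanSpace ℝ (Fin n) → EuclideanSpace ℝ (Fin n)) (hf : ContinuousOn f U)
    (ψ : EuclideanSpace ℝ (Fin n) → EuclideanSpace ℝ (Fin m))
    (hψ : ContDiffOn ℝ 1 ψ U)
    (Λ : EuclideanSpace ℝ (Fin n) →
      (EuclideanSpace ℝ (Fin n) →L[ℝ] EuclideanSpace ℝ (Fin m)))
    (hΛ : ContinuousOn Λ U)
    (hmult : ∀ (x : ℝ → EuclideanSpace ℝ (Fin n)) (v : EuclideanSpace ℝ (Fin n)) (t : ℝ),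
      x t ∈ U → HasDerivAt x v t →
      HasDerivAt (fun s => ψ (x s)) (Λ (x t) (v - f (x t))) t) :
    ∀ y ∈ U, fderiv ℝ ψ y = Λ y ∧ Λ y (f y) = 0 := by
  intro y hy
  have hdiff : DifferentiableAt ℝ ψ y :=
    (hψ.differentiableOn one_ne_zero).differentiableAt (hU.mem_nhds hy)
  -- key: for any v, fderiv ψ y v = Λ y (v - f y)
  have key : ∀ v, fderiv ℝ ψ y v = Λ y (v - f y) := by
    intro v
    have hx : HasDerivAt (fun s : ℝ => y + s • v) v 0 := by
      have : HasDerivAt (fun s : ℝ => s • v) ((1 : ℝ) • v) 0 :=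
        (hasDerivAt_id 0).smul_const v
      simpa using this.const_add y
    have hx0 : (fun s : ℝ => y + s • v) 0 = y := by simp
    have h1 := hmult (fun s : ℝ => y + s • v) v 0 (by simpa using hy) hx
    have h2 : HasDerivAt (fun s : ℝ => ψ (y + s • v)) (fderiv ℝ ψ y v) 0 := by
      have hfd : HasFDerivAt ψ (fderiv ℝ ψ y) (y + (0:ℝ) • v) := by
        simpa using hdiff.hasFDerivAt
      exact hfd.comp_hasDerivAt 0 hx
    simp only [zero_smul, add_zero] at h1
    exact h2.unique h1
  have hzero : Λ y (f y) = 0 := by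
    have h0 := key 0
    simp only [map_zero, zero_sub, map_neg, map_sub] at h0
    exact neg_eq_zero.mp h0.symm
  constructor
  · refine ContinuousLinearMap.ext fun v => ?_
    have := key v
    rw [map_sub, hzero, sub_zero] at this
    exact this
  · exact hzero
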